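/- If φ : π₁(Σ_g) → F_n is a surjective group homomorphism from the fundamental group of a closed orientable surface of genus g onto the free group of rank n, then n ≤ g. -/

import Mathlib

/-- The commutator `x⁻¹ y⁻¹ x y`. -/
def commE {G : Type*} [Group G] (x y : G) : G := x⁻¹ * y⁻¹ * x * y

/-- The surface relator `[a₁,b₁]⋯[a_g,b_g]` in the free group on `a₁,…,a_g,b₁,…,b_g`. -/
def surfaceRel (g : ℕ) : FreeGroup (Fin g ⊕ Fin g) :=
  (List.ofFn fun i : Fin g =>
    commE (FreeGroup.of (Sum.inl i)) (FreeGroup.of (Sum.inr i))).prod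

/-- The fundamental group of the closed orientable surface of genus `g`. -/
abbrev SurfaceGroup (g : ℕ) : Type := PresentedGroup {surfaceRel g}


structure Heis where
  a : ZMod 2
  b : ZMod 2
  c : ZMod 2
deriving DecidableEq, Fintype

namespace Heis

instance : Group Heis where
  mul x y := ⟨x.a + y.a, x.b + y.b, x.c + y.c + x.a * y.b⟩
  one := ⟨0, 0, 0⟩
  inv x := ⟨-x.a, -x.b, -x.c + x.a * x.b⟩
  mul_assoc := by decide
  one_mul := by decide
  mul_one := by decide
  inv_mul_cancel := by decide

lemma commE_eq (x y : Heis) : commE x y = ⟨0, 0, x.a * y.b + y.a * x.b⟩ := by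
  revert x y; decide

lemma central_prod (l : List (ZMod 2)) :
    (l.map fun c => (⟨0, 0, c⟩ : Heis)).prod = ⟨0, 0, l.sum⟩ := by
  induction l with
  | nil => rfl
  | cons h t ih =>
    simp only [List.map_cons, List.prod_cons, List.sum_cons, ih]
    show (⟨0+0, 0+0, h + t.sum + 0*0⟩ : Heis) = _
    simp

def pA : Heis →* Multiplicative (ZMod 2) where
  toFun x := Multiplicative.ofAdd x.a
  map_one' := rfl
  map_mul' := by intros; rfl

def pB : Heis →* Multiplicative (ZMod 2) where
  toFun x := Multiplicative.ofAdd x.b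
  map_one' := rfl
  map_mul' := by intros; rfl

lemma ofFn_central {g : ℕ} (c : Fin g → ZMod 2) :
    (List.ofFn fun i => (⟨0, 0, c i⟩ : Heis)).prod = ⟨0, 0, ∑ i, c i⟩ := by
  rw [show (fun i => (⟨0, 0, c i⟩ : Heis)) = (fun x => (⟨0, 0, x⟩ : Heis)) ∘ c from rfl,
    ← List.map_ofFn, central_prod, List.sum_ofFn]

end Heis

lemma map_commE {G H : Type*} [Group G] [Group H] (f : G →* H) (x y : G) :
    f (commE x y) = commE (f x) (f y) := by
  simp [commE]

section Main

variable {g n : ℕ}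

/-- the hom attached to a vector. -/
def Av (v : Fin n → ZMod 2) : FreeGroup (Fin n) →* Multiplicative (ZMod 2) :=
  FreeGroup.lift fun i => Multiplicative.ofAdd (v i)

lemma Av_add (v w : Fin n → ZMod 2) : Av (v + w) = (Av v) * (Av w) := by
  apply FreeGroup.ext_hom
  intro i
  simp [Av, ofAdd_add]

/-- mk of the relator is 1 -/
lemma mk_rel (g : ℕ) : PresentedGroup.mk {surfaceRel g} (surfaceRel g) = 1 := by
  have : surfaceRel g ∈ Subgroup.normalClosure {surfaceRel g} :=
    Subgroup.subset_normalClosure rfl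
  exact (QuotientGroup.eq_one_iff _).mpr this

variable (φ : SurfaceGroup g →* FreeGroup (Fin n))

/-- The pullback map on cohomology, as a bare function. -/
def Phi (v : Fin n → ZMod 2) : (Fin g ⊕ Fin g) → ZMod 2 :=
  fun s => Multiplicative.toAdd (Av v (φ (PresentedGroup.of s)))

lemma Phi_add (v w : Fin n → ZMod 2) : Phi φ (v + w) = Phi φ v + Phi φ w := by
  funext s
  simp [Phi, Av_add]

def PhiL : (Fin n → ZMod 2) →ₗ[ZMod 2] ((Fin g ⊕ Fin g) → ZMod 2) :=
  AddMonoidHom.toZModLinearMap 2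
    { toFun := Phi φ
      map_zero' := by
        funext s
        simp only [Phi]
        have : Av (0 : Fin n → ZMod 2) = 1 := by
          apply FreeGroup.ext_hom; intro i; simp [Av]
        simp [this]
      map_add' := Phi_add φ }

lemma PhiL_inj (hφ : Function.Surjective φ) : Function.Injective (PhiL φ) := by
  rw [injective_iff_map_eq_zero]
  intro v hv
  have hgen : ∀ s, Av v (φ (PresentedGroup.of s)) = 1 := by
    intro s
    have h0 : Phi φ v s = 0 := congrFun hv s
    simpa [Phi] using congrArg Multiplicative.ofAdd h0
  have hcomp : ((Av v).comp φ).comp (PresentedGroup.mk {surfaceRel g}) = 1 := by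
    apply FreeGroup.ext_hom
    intro s
    exact hgen s
  have hall : ∀ x : SurfaceGroup g, Av v (φ x) = 1 := by
    intro x
    obtain ⟨z, rfl⟩ := PresentedGroup.mk_surjective _ x
    exact DFunLike.congr_fun hcomp z
  funext i
  obtain ⟨x, hx⟩ := hφ (FreeGroup.of i)
  have : Av v (FreeGroup.of i) = 1 := by rw [← hx]; exact hall x
  have : Multiplicative.ofAdd (v i) = (1 : Multiplicative (ZMod 2)) := by
    simpa [Av] using this
  simpa using congrArg Multiplicative.toAdd this

/-- Isotropy of the pulled-back classes. -/
lemma isotropic (v w : Fin n → ZMod 2) :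
    ∑ i : Fin g,
      (Phi φ v (Sum.inl i) * Phi φ w (Sum.inr i)
        + Phi φ v (Sum.inr i) * Phi φ w (Sum.inl i)) = 0 := by
  set h : FreeGroup (Fin n) →* Heis := FreeGroup.lift fun i => (⟨v i, w i, 0⟩ : Heis) with hh
  set L : FreeGroup (Fin g ⊕ Fin g) →* Heis :=
    (h.comp φ).comp (PresentedGroup.mk {surfaceRel g}) with hL
  have hA : ∀ x : FreeGroup (Fin n), (h x).a = Multiplicative.toAdd (Av v x) := by
    intro x
    have : Heis.pA.comp h = Av v := by
      apply FreeGroup.ext_hom; intro i; simp [Heis.pA, Av, hh]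
    have := DFunLike.congr_fun this x
    simpa [Heis.pA] using congrArg Multiplicative.toAdd this
  have hB : ∀ x : FreeGroup (Fin n), (h x).b = Multiplicative.toAdd (Av w x) := by
    intro x
    have : Heis.pB.comp h = Av w := by
      apply FreeGroup.ext_hom; intro i; simp [Heis.pB, Av, hh]
    have := DFunLike.congr_fun this x
    simpa [Heis.pB] using congrArg Multiplicative.toAdd this
  have hLrel : L (surfaceRel g) = 1 := by
    simp [hL, mk_rel g]
  have hcompute : L (surfaceRel g)
      = ⟨0, 0, ∑ i : Fin g,
          (Phi φ v (Sum.inl i) * Phi φ w (Sum.inr i)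
            + Phi φ v (Sum.inr i) * Phi φ w (Sum.inl i))⟩ := by
    rw [surfaceRel, map_list_prod]
    rw [List.map_ofFn]
    have : (⇑L ∘ fun i : Fin g => commE (FreeGroup.of (Sum.inl i)) (FreeGroup.of (Sum.inr i)))
        = fun i : Fin g => (⟨0, 0,
            Phi φ v (Sum.inl i) * Phi φ w (Sum.inr i)
              + Phi φ v (Sum.inr i) * Phi φ w (Sum.inl i)⟩ : Heis) := by
      funext i
      simp only [Function.comp_apply]
      rw [map_commE, Heis.commE_eq]
      have e1 : (L (FreeGroup.of (Sum.inl i))).a = Phi φ v (Sum.inl i) := hA _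
      have e2 : (L (FreeGroup.of (Sum.inr i))).b = Phi φ w (Sum.inr i) := hB _
      have e3 : (L (FreeGroup.of (Sum.inr i))).a = Phi φ v (Sum.inr i) := hA _
      have e4 : (L (FreeGroup.of (Sum.inl i))).b = Phi φ w (Sum.inl i) := hB _
      rw [e1, e2, e3, e4]
    rw [this, Heis.ofFn_central]
  rw [hcompute] at hLrel
  exact congrArg Heis.c hLrel

end Main

section LinAlg

instance : Fact (Nat.Prime 2) := ⟨Nat.prime_two⟩

/-- The mod-2 intersection form. -/
def Bform (g : ℕ) : ((Fin g ⊕ Fin g) → ZMod 2) →ₗ[ZMod 2]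
    Module.Dual (ZMod 2) ((Fin g ⊕ Fin g) → ZMod 2) :=
  LinearMap.mk₂ (ZMod 2)
    (fun x y => ∑ i : Fin g,
      (x (Sum.inl i) * y (Sum.inr i) + x (Sum.inr i) * y (Sum.inl i)))
    (by
      intro x x' y
      simp only [Pi.add_apply]
      rw [← Finset.sum_add_distrib]
      exact Finset.sum_congr rfl fun i _ => by ring)
    (by
      intro c x y
      simp only [Pi.smul_apply, smul_eq_mul, Finset.mul_sum]
      exact Finset.sum_congr rfl fun i _ => by ring)
    (by
      intro x y y'
      simp only [Pi.add_apply]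
      rw [← Finset.sum_add_distrib]
      exact Finset.sum_congr rfl fun i _ => by ring)
    (by
      intro c x y
      simp only [Pi.smul_apply, smul_eq_mul, Finset.mul_sum]
      exact Finset.sum_congr rfl fun i _ => by ring)

lemma Bform_inj (g : ℕ) : Function.Injective (Bform g) := by
  rw [injective_iff_map_eq_zero]
  intro x hx
  funext s
  cases s with
  | inl i =>
    have := DFunLike.congr_fun hx (Pi.single (Sum.inr i) 1)
    simpa [Bform, Pi.single_apply, mul_ite, Finset.sum_ite_eq'] using this
  | inr i =>
    have := DFunLike.congr_fun hx (Pi.single (Sum.inl i) 1)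
    simpa [Bform, Pi.single_apply, mul_ite, Finset.sum_ite_eq'] using this

end LinAlg

theorem zieschang_surjective_onto_free (g n : ℕ)
    (φ : SurfaceGroup g →* FreeGroup (Fin n)) (hφ : Function.Surjective φ) :
    n ≤ g := by
  classical
  set Φ := PhiL φ with hΦ
  set S := (Bform g) ∘ₗ Φ with hS
  have hSinj : Function.Injective S := (Bform_inj g).comp (PhiL_inj φ hφ)
  set W' := LinearMap.range S with hW'
  have hle : LinearMap.range Φ ≤ W'.dualCoannihilator := by
    rintro _ ⟨w, rfl⟩
    rw [Submodule.mem_dualCoannihilator]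
    rintro f ⟨v, rfl⟩
    show Bform g (Φ v) (Φ w) = 0
    exact isotropic φ v w
  have h1 : Module.finrank (ZMod 2) (LinearMap.range Φ) = n := by
    rw [LinearMap.finrank_range_of_inj (PhiL_inj φ hφ)]
    simp [Module.finrank_fintype_fun_eq_card]
  have h2 : Module.finrank (ZMod 2) W' = n := by
    rw [hW', LinearMap.finrank_range_of_inj hSinj]
    simp [Module.finrank_fintype_fun_eq_card]
  have h3 := Subspace.finrank_add_finrank_dualCoannihilator_eq W'
  have h5 : Module.finrank (ZMod 2) ((Fin g ⊕ Fin g) → ZMod 2) = g + g := by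
    simp [Module.finrank_fintype_fun_eq_card]
  have h4 : n ≤ Module.finrank (ZMod 2) W'.dualCoannihilator := by
    rw [← h1]
    exact Submodule.finrank_mono hle
  omega
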